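/- arXiv:1306.6265 — 8 statements merged into one kernel-verified Lean document; each statement's English description precedes it below -/
import Mathlib

section
/- Let H be an r × n matrix over F_q whose rows are linearly independent (rank r), and let S be a subset of the column indices {1,…,n} such that no nonzero vector in the row space of H has its support contained in S. Then for every syndrome m ∈ F_q^r and every assignment z : S → F_q of values on the coordinates in S, the number of vectors x ∈ F_q^n satisfying H·x = m and x_i = z_i for all i ∈ S equals q^{n − r − |S|}. (Perfect secrecy of linear coset coding against an eavesdropper seeing fewer than d(C^⊥) chosen coordinates.) -/
/-- The support of a vector, as a finset of coordinates. -/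
def supp {n : ℕ} {F : Type} [Field F] [DecidableEq F] (c : Fin n → F) : Finset (Fin n) :=
  Finset.univ.filter (fun i => c i ≠ 0)

/-- Perfect secrecy of linear coset coding: if no nonzero vector of the row space of the
parity-check matrix `H` has support inside `S`, then for each syndrome `m` and each
assignment `z` of values on the coordinates in `S`, the number of encodings `x` with
`H · x = m` agreeing with `z` on `S` is exactly `q ^ (n - r - |S|)`, independently of `m`. -/
theorem coset_coding_perfect_secrecy {n r : ℕ} {F : Type} [Field F] [Fintype F] [DecidableEq F]
    (H : Matrix (Fin r) (Fin n) F) (hH : LinearIndependent F (fun i => H i))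
    (S : Finset (Fin n))
    (hS : ∀ c ∈ Submodule.span F (Set.range fun i => H i), supp c ⊆ S → c = 0)
    (m : Fin r → F) (z : Fin n → F) :
    Nat.card {x : Fin n → F // H.mulVec x = m ∧ ∀ i ∈ S, x i = z i} =
      Fintype.card F ^ (n - r - S.card) := by
  classical
  set M : Matrix (Fin r ⊕ S) (Fin n) F :=
    Matrix.of (Sum.elim (fun j => H j)
      (fun i : S => (Pi.single (i : Fin n) (1 : F) : Fin n → F))) with hM
  -- linear independence of the standard basis rows
  have hsingle : LinearIndependent F
      (fun i : S => (Pi.single (i : Fin n) (1 : F) : Fin n → F)) := by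
    have h2 := (Pi.basisFun F (Fin n)).linearIndependent.comp
      (fun i : S => (i : Fin n)) Subtype.val_injective
    convert h2 using 1
    funext i
    simp [Pi.basisFun_apply]
  -- the singles span inside "supported on S"
  have hT : ∀ x ∈ Submodule.span F
      (Set.range fun i : S => (Pi.single (i : Fin n) (1 : F) : Fin n → F)),
      ∀ j ∉ S, x j = 0 := by
    intro x hx
    have : Submodule.span F
        (Set.range fun i : S => (Pi.single (i : Fin n) (1 : F) : Fin n → F)) ≤
        Submodule.pi ((↑S : Set (Fin n))ᶜ) (fun _ => ⊥) := by
      rw [Submodule.span_le]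
      rintro _ ⟨i, rfl⟩
      intro j hj
      simp only [Submodule.mem_bot]
      exact Pi.single_eq_of_ne (by rintro rfl; exact hj (by exact_mod_cast i.2)) 1
    intro j hj
    have := this hx j (by simpa using hj)
    exact (Submodule.mem_bot F).mp this
  have hdisj : Disjoint (Submodule.span F (Set.range fun j => H j))
      (Submodule.span F
        (Set.range fun i : S => (Pi.single (i : Fin n) (1 : F) : Fin n → F))) := by
    rw [Submodule.disjoint_def]
    intro x hx1 hx2
    refine hS x hx1 ?_
    intro j hj
    simp only [supp, Finset.mem_filter] at hj
    by_contra hjS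
    exact hj.2 (hT x hx2 j hjS)
  have hMind : LinearIndependent F (fun k => M k) := hH.sum_type hsingle hdisj
  -- rank and surjectivity
  have hrank : M.rank = r + S.card := by
    rw [hMind.rank_matrix]; simp
  have hle : r + S.card ≤ n := by
    have := M.rank_le_card_width
    rw [hrank] at this; simpa using this
  have hsurj : Function.Surjective M.mulVecLin := by
    rw [← LinearMap.range_eq_top]
    apply Submodule.eq_top_of_finrank_eq
    rw [← Matrix.rank, hrank]
    simp [Module.finrank_pi]
  -- target vector
  set w : Fin r ⊕ S → F := Sum.elim m (fun i => z i) with hw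
  obtain ⟨x₀, hx₀⟩ := hsurj w
  -- condition equivalence
  have hcond : ∀ x : Fin n → F,
      (H.mulVec x = m ∧ ∀ i ∈ S, x i = z i) ↔ M.mulVec x = w := by
    intro x
    constructor
    · rintro ⟨h1, h2⟩
      funext k
      cases k with
      | inl j => simpa [M, w, Matrix.mulVec] using congrFun h1 j
      | inr i => simp [M, w, Matrix.mulVec, single_dotProduct, h2 i i.2]
    · intro h
      constructor
      · funext j
        simpa [M, w, Matrix.mulVec] using congrFun h (Sum.inl j)
      · intro i hi
        simpa [M, w, Matrix.mulVec, single_dotProduct] using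
          congrFun h (Sum.inr ⟨i, hi⟩)
  -- fiber equiv to kernel
  have e1 : {x : Fin n → F // H.mulVec x = m ∧ ∀ i ∈ S, x i = z i} ≃
      LinearMap.ker M.mulVecLin := by
    refine (Equiv.subtypeEquivRight hcond).trans ?_
    refine ⟨fun x => ⟨x.1 - x₀, ?_⟩, fun y => ⟨y.1 + x₀, ?_⟩, ?_, ?_⟩
    · have hx₀' : M.mulVec x₀ = w := hx₀
      rw [LinearMap.mem_ker, map_sub]
      simp only [Matrix.mulVecLin_apply]
      rw [x.2, hx₀', sub_self]
    · have hx₀' : M.mulVec x₀ = w := hx₀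
      have := y.2
      rw [LinearMap.mem_ker] at this
      simp only [Matrix.mulVecLin_apply] at this ⊢
      rw [Matrix.mulVec_add, this, hx₀', zero_add]
    · intro x; ext : 1; simp
    · intro y; ext : 1; simp
  rw [Nat.card_congr e1, Nat.card_eq_fintype_card, Module.card_eq_pow_finrank (K := F)]
  congr 1
  have hrn := LinearMap.finrank_range_add_finrank_ker M.mulVecLin
  rw [← Matrix.rank, hrank] at hrn
  simp only [Module.finrank_pi, Fintype.card_fin] at hrn
  omega
end

section
/- Every intersecting binary linear code is minimal: if C is a linear code of length n over F_2 such that for all nonzero codewords c, c' ∈ C, supp(c) ∩ supp(c') ≠ ∅, then every nonzero codeword of C is minimal, i.e., for nonzero c, c' ∈ C, supp(c') ⊆ supp(c) implies c' = c. -/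
/-- Every intersecting binary linear code is minimal: if the supports of any two nonzero
codewords of `C ⊆ F_2^n` intersect, then for nonzero codewords `c, c' ∈ C`,
`supp c' ⊆ supp c` implies `c' = c`. -/
theorem intersecting_binary_code_is_minimal {n : ℕ}
    (C : Submodule (ZMod 2) (Fin n → ZMod 2))
    (hint : ∀ c ∈ C, c ≠ 0 → ∀ c' ∈ C, c' ≠ 0 → (supp c ∩ supp c').Nonempty) :
    ∀ c ∈ C, c ≠ 0 → ∀ c' ∈ C, c' ≠ 0 → supp c' ⊆ supp c → c' = c := by
  intro c hc hc0 c' hc' hc'0 hsub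
  by_contra hne
  have hd : c - c' ∈ C := C.sub_mem hc hc'
  have hd0 : c - c' ≠ 0 := sub_ne_zero.mpr (fun h => hne h.symm)
  obtain ⟨i, hi⟩ := hint _ hd hd0 c' hc' hc'0
  simp only [supp, Finset.mem_inter, Finset.mem_filter] at hi
  have h1 : c' i ≠ 0 := hi.2.2
  have h2 : c i ≠ 0 := by
    have := hsub (Finset.mem_filter.mpr ⟨Finset.mem_univ i, h1⟩)
    exact (Finset.mem_filter.mp this).2
  have key : ∀ x : ZMod 2, x ≠ 0 → x = 1 := by decide
  have e1 : c' i = 1 := key _ h1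
  have e2 : c i = 1 := key _ h2
  have : (c - c') i = 0 := by simp [e1, e2]
  exact hi.1.2 this
end

section
/- Every constant-weight linear code is minimal: if C is a linear code of length n over F_q and there is a natural number w > 0 such that every nonzero codeword of C has Hamming weight exactly w, then every nonzero codeword of C is minimal, i.e., for nonzero c, c' ∈ C with supp(c') ⊆ supp(c), the codeword c' is a scalar multiple of c. -/
lemma mem_supp {n : ℕ} {F : Type} [Field F] [DecidableEq F] (c : Fin n → F) (i : Fin n) :
    i ∈ supp c ↔ c i ≠ 0 := by simp [supp]

/-- Every constant-weight linear code is minimal: if every nonzero codeword of `C` has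
Hamming weight exactly `w > 0`, then every nonzero codeword of `C` is minimal. -/
theorem constant_weight_code_is_minimal {n w : ℕ} {F : Type} [Field F] [Fintype F]
    [DecidableEq F]
    (C : Submodule F (Fin n → F)) (hw : 0 < w)
    (hconst : ∀ c ∈ C, c ≠ 0 → (supp c).card = w) :
    ∀ c ∈ C, c ≠ 0 → ∀ c' ∈ C, c' ≠ 0 → supp c' ⊆ supp c → ∃ lam : F, c' = lam • c := by
  intro c hc hc0 c' hc' hc'0 hsub
  have hcard : (supp c).card = w := hconst c hc hc0
  have hne : (supp c).Nonempty := Finset.card_pos.mp (hcard ▸ hw)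
  obtain ⟨i, hi⟩ := hne
  have hci : c i ≠ 0 := (mem_supp c i).mp hi
  set lam : F := c' i * (c i)⁻¹ with hlam
  refine ⟨lam, ?_⟩
  set d : Fin n → F := c' - lam • c with hd
  have hdC : d ∈ C := Submodule.sub_mem C hc' (Submodule.smul_mem C lam hc)
  have hdi : d i = 0 := by
    simp only [hd, Pi.sub_apply, Pi.smul_apply, smul_eq_mul, hlam]
    field_simp
    simp
  have hdsub : supp d ⊆ (supp c).erase i := by
    intro j hj
    have hdj : d j ≠ 0 := (mem_supp d j).mp hj
    have hji : j ≠ i := by rintro rfl; exact hdj hdi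
    refine Finset.mem_erase.mpr ⟨hji, ?_⟩
    by_contra hjc
    have hcj : c j = 0 := by
      by_contra h; exact hjc ((mem_supp c j).mpr h)
    have hc'j : c' j = 0 := by
      by_contra h; exact hjc (hsub ((mem_supp c' j).mpr h))
    apply hdj
    simp [hd, hcj, hc'j]
  have hd0 : d = 0 := by
    by_contra hd0
    have h1 : (supp d).card = w := hconst d hdC hd0
    have h2 : (supp d).card ≤ ((supp c).erase i).card := Finset.card_le_card hdsub
    rw [Finset.card_erase_of_mem hi, hcard, h1] at h2
    omega
  have heq := sub_eq_zero.mp (show c' - lam • c = 0 from hd ▸ hd0)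
  exact heq
end

section
/- (Maximal bound, counting form) If C is a minimal linear code of length n and dimension k over F_q, then q^k ≤ 1 + (q − 1) · binom(n, ⌊n/2⌋), where binom denotes the binomial coefficient. -/
lemma supp_smul_ne {n : ℕ} {F : Type} [Field F] [DecidableEq F] {lam : F} (h : lam ≠ 0)
    (c : Fin n → F) : supp (lam • c) = supp c := by
  ext i
  simp [supp, h]

/-- Maximal bound (counting form): a minimal linear code of length `n` and dimension `k`
over `F_q` satisfies `q^k ≤ 1 + (q - 1) * binom(n, ⌊n/2⌋)`. -/
theorem minimal_code_sperner_bound {n k : ℕ} {F : Type} [Field F] [Fintype F] [DecidableEq F]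
    (C : Submodule F (Fin n → F)) (hk : Module.finrank F C = k)
    (hmin : ∀ c ∈ C, c ≠ 0 → ∀ c' ∈ C, supp c' ⊆ supp c → ∃ lam : F, c' = lam • c) :
    Fintype.card F ^ k ≤ 1 + (Fintype.card F - 1) * Nat.choose n (n / 2) := by
  classical
  set q := Fintype.card F with hq
  have hcard : Fintype.card C = q ^ k := by
    rw [Module.card_eq_pow_finrank (K := F) (V := C), hk]
  set T : Finset (Fin n → F) := Finset.univ.filter (fun c => c ∈ C) with hT
  have hTcard : T.card = q ^ k := by
    rw [← hcard]
    exact (Fintype.card_subtype _).symm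
  set S : Finset (Fin n → F) := T.erase 0 with hS
  have h0T : (0 : Fin n → F) ∈ T := by simp [hT, C.zero_mem]
  have hScard : S.card = q ^ k - 1 := by
    rw [hS, Finset.card_erase_of_mem h0T, hTcard]
  have hmemS : ∀ c ∈ S, c ∈ C ∧ c ≠ 0 := by
    intro c hc
    rw [hS, Finset.mem_erase, hT, Finset.mem_filter] at hc
    exact ⟨hc.2.2, hc.1⟩
  set A : Finset (Finset (Fin n)) := S.image supp with hA
  -- antichain
  have hanti : IsAntichain (· ⊆ ·) (A : Set (Finset (Fin n))) := by
    intro s hs t ht hst hsub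
    simp only [hA, Finset.coe_image, Set.mem_image, Finset.mem_coe] at hs ht
    obtain ⟨c, hc, rfl⟩ := hs
    obtain ⟨c', hc', rfl⟩ := ht
    obtain ⟨hcC, hc0⟩ := hmemS c hc
    obtain ⟨hc'C, hc'0⟩ := hmemS c' hc'
    obtain ⟨lam, hlam⟩ := hmin c' hc'C hc'0 c hcC hsub
    have hlam0 : lam ≠ 0 := by
      rintro rfl
      simp at hlam
      exact hc0 hlam
    exact hst (by rw [hlam, supp_smul_ne hlam0])
  have hsperner : A.card ≤ Nat.choose n (n / 2) := by
    have := IsAntichain.sperner hanti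
    simpa using this
  -- fibers
  have hfiber : ∀ s ∈ A, (S.filter fun c => supp c = s).card ≤ q - 1 := by
    intro s hs
    obtain ⟨c₀, hc₀S, hc₀s⟩ := Finset.mem_image.mp hs
    obtain ⟨hc₀C, hc₀0⟩ := hmemS c₀ hc₀S
    have hsub : S.filter (fun c => supp c = s) ⊆
        ((Finset.univ : Finset F).erase 0).image (fun lam => lam • c₀) := by
      intro c' hc'
      rw [Finset.mem_filter] at hc'
      obtain ⟨hc'S, hc's⟩ := hc'
      obtain ⟨hc'C, hc'0⟩ := hmemS c' hc'S
      obtain ⟨lam, hlam⟩ := hmin c₀ hc₀C hc₀0 c' hc'C (by rw [hc's, ← hc₀s])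
      have hlam0 : lam ≠ 0 := by
        rintro rfl
        simp at hlam
        exact hc'0 hlam
      exact Finset.mem_image.mpr ⟨lam, by simp [hlam0], hlam.symm⟩
    calc (S.filter fun c => supp c = s).card
        ≤ (((Finset.univ : Finset F).erase 0).image (fun lam => lam • c₀)).card :=
          Finset.card_le_card hsub
      _ ≤ ((Finset.univ : Finset F).erase 0).card := Finset.card_image_le
      _ = q - 1 := by rw [Finset.card_erase_of_mem (Finset.mem_univ _), Finset.card_univ]
  have hmain : S.card ≤ (q - 1) * A.card := Finset.card_le_mul_card_image S (q - 1) hfiber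
  have hq1 : 1 ≤ q ^ k := Nat.one_le_pow _ _ Fintype.card_pos
  have : q ^ k - 1 ≤ (q - 1) * Nat.choose n (n / 2) := by
    calc q ^ k - 1 = S.card := hScard.symm
      _ ≤ (q - 1) * A.card := hmain
      _ ≤ (q - 1) * Nat.choose n (n / 2) := Nat.mul_le_mul_left _ hsperner
  omega
end

section
/- (Maximal bound, rate form) If C is a minimal linear code of length n ≥ 1 and dimension k over F_q, then q^{k−1} ≤ 2^{n−1}. (In particular the rate k/n is asymptotically at most log_q 2.) -/
lemma supp_smul_ne_zero {n : ℕ} {F : Type} [Field F] [DecidableEq F] {lam : F}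
    (hlam : lam ≠ 0) (c : Fin n → F) : supp (lam • c) = supp c := by
  ext i
  simp [supp, hlam]

/-- Any binomial coefficient in row `m+1` is at most `2^m`. -/
lemma choose_le_two_pow {m j : ℕ} : (m + 1).choose j ≤ 2 ^ m := by
  rcases j with _ | j
  · simpa using Nat.one_le_two_pow
  rw [Nat.choose_succ_succ]
  rcases le_or_gt (j + 1) m with h | h
  · calc m.choose j + m.choose (j + 1)
        = ∑ i ∈ ({j, j + 1} : Finset ℕ), m.choose i := by
          rw [Finset.sum_pair (by omega)]
      _ ≤ ∑ i ∈ Finset.range (m + 1), m.choose i := by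
          apply Finset.sum_le_sum_of_subset
          intro x hx
          simp only [Finset.mem_insert, Finset.mem_singleton] at hx
          rcases hx with rfl | rfl <;> simp [Finset.mem_range] <;> omega
      _ = 2 ^ m := Nat.sum_range_choose m
  · rw [Nat.choose_eq_zero_of_lt h, add_zero]
    rcases le_or_gt j m with hj | hj
    · calc m.choose j ≤ ∑ i ∈ Finset.range (m + 1), m.choose i :=
            Finset.single_le_sum (fun _ _ => Nat.zero_le _) (Finset.mem_range.2 (by omega))
        _ = 2 ^ m := Nat.sum_range_choose m
    · rw [Nat.choose_eq_zero_of_lt hj]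
      exact Nat.zero_le _

/-- Maximal bound (rate form): a minimal linear code of length `n ≥ 1` and dimension `k`
over `F_q` satisfies `q^(k-1) ≤ 2^(n-1)`; in particular the rate `k/n` is asymptotically
at most `log_q 2`. -/
theorem minimal_code_rate_bound {n k : ℕ} {F : Type} [Field F] [Fintype F] [DecidableEq F]
    (hn : 1 ≤ n)
    (C : Submodule F (Fin n → F)) (hk : Module.finrank F C = k)
    (hmin : ∀ c ∈ C, c ≠ 0 → ∀ c' ∈ C, supp c' ⊆ supp c → ∃ lam : F, c' = lam • c) :
    Fintype.card F ^ (k - 1) ≤ 2 ^ (n - 1) := by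
  classical
  rcases Nat.eq_zero_or_pos k with rfl | hkpos
  · simpa using Nat.one_le_two_pow
  set q := Fintype.card F with hq
  have hq2 : 2 ≤ q := Fintype.one_lt_card
  haveI : Fintype C := Fintype.ofFinite C
  have hcard : Fintype.card C = q ^ k := by
    rw [Module.card_eq_pow_finrank (K := F) (V := C), hk]
  -- the nonzero codewords
  set N : Finset C := Finset.univ.filter (fun c : C => (c : Fin n → F) ≠ 0) with hN
  set f : C → Finset (Fin n) := fun c => supp (c : Fin n → F) with hf
  set 𝒜 : Finset (Finset (Fin n)) := N.image f with h𝒜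
  -- supports of projectively distinct nonzero codewords form an antichain
  have hanti : IsAntichain (· ⊆ ·) (𝒜 : Set (Finset (Fin n))) := by
    intro s hs t ht hst hsub
    simp only [h𝒜, Finset.coe_image, Set.mem_image, Finset.mem_coe, hN,
      Finset.mem_filter, Finset.mem_univ, true_and] at hs ht
    obtain ⟨c, hc0, rfl⟩ := hs
    obtain ⟨c', hc'0, rfl⟩ := ht
    obtain ⟨lam, hlam⟩ := hmin c' c'.2 hc'0 c c.2 hsub
    have hlam0 : lam ≠ 0 := by
      rintro rfl
      exact hc0 (by simpa using hlam)
    apply hst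
    rw [hf]
    simp only [hlam]
    exact supp_smul_ne_zero hlam0 _
  -- each support has at most q - 1 preimages among nonzero codewords
  have hfiber : ∀ a ∈ N.image f, (N.filter (fun c => f c = a)).card ≤ q - 1 := by
    intro a ha
    obtain ⟨c₀, hc₀N, hc₀⟩ := Finset.mem_image.1 ha
    have hc₀0 : (c₀ : Fin n → F) ≠ 0 := (Finset.mem_filter.1 hc₀N).2
    set g : C → F := fun c =>
      if h : ∃ lam : F, (c : Fin n → F) = lam • (c₀ : Fin n → F) then h.choose else 0 with hg
    have key : ∀ c ∈ N.filter (fun c => f c = a),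
        (c : Fin n → F) = g c • (c₀ : Fin n → F) ∧ g c ≠ 0 := by
      intro c hc
      rw [Finset.mem_filter, Finset.mem_filter] at hc
      obtain ⟨⟨-, hc0⟩, hca⟩ := hc
      have hsub : supp (c : Fin n → F) ⊆ supp (c₀ : Fin n → F) := by
        rw [show supp (c : Fin n → F) = a from hca, ← hc₀]
      have hex : ∃ lam : F, (c : Fin n → F) = lam • (c₀ : Fin n → F) :=
        hmin c₀ c₀.2 hc₀0 c c.2 hsub
      have heq : (c : Fin n → F) = g c • (c₀ : Fin n → F) := by
        rw [hg]; simp only [hex, dif_pos]; exact hex.choose_spec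
      refine ⟨heq, fun h0 => hc0 ?_⟩
      rw [heq, h0, zero_smul]
    have : (N.filter (fun c => f c = a)).card ≤ (Finset.univ.erase (0 : F)).card := by
      apply Finset.card_le_card_of_injOn g
      · intro c hc
        exact Finset.mem_erase.2 ⟨(key c hc).2, Finset.mem_univ _⟩
      · intro c hc c' hc' hgg
        obtain ⟨heq, -⟩ := key c hc
        obtain ⟨heq', -⟩ := key c' hc'
        exact Subtype.ext (by rw [heq, heq', hgg])
    rwa [Finset.card_erase_of_mem (Finset.mem_univ _), Finset.card_univ] at this
  have hNcard : N.card = q ^ k - 1 := by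
    have : N = Finset.univ.erase (0 : C) := by
      ext c
      simp [hN, Finset.mem_erase, and_comm, Submodule.coe_eq_zero]
    rw [this, Finset.card_erase_of_mem (Finset.mem_univ _), Finset.card_univ, hcard]
  have hmain : q ^ k - 1 ≤ (q - 1) * 𝒜.card := by
    rw [← hNcard, h𝒜]
    exact Finset.card_le_mul_card_image N (q - 1) hfiber
  -- deduce q^(k-1) ≤ #𝒜
  have hA : q ^ (k - 1) ≤ 𝒜.card := by
    have h1 : q ^ (k - 1) * (q - 1) ≤ q ^ k - 1 := by
      have hkk : q ^ (k - 1) * q = q ^ k := by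
        rw [← pow_succ]
        congr 1
        omega
      have h2 : 1 ≤ q ^ (k - 1) := Nat.one_le_pow _ _ (by omega)
      calc q ^ (k - 1) * (q - 1) = q ^ k - q ^ (k - 1) := by
            rw [Nat.mul_sub, mul_one, hkk]
        _ ≤ q ^ k - 1 := Nat.sub_le_sub_left h2 _
    have h3 : q ^ (k - 1) * (q - 1) ≤ 𝒜.card * (q - 1) := by
      calc q ^ (k - 1) * (q - 1) ≤ q ^ k - 1 := h1
        _ ≤ (q - 1) * 𝒜.card := hmain
        _ = 𝒜.card * (q - 1) := mul_comm _ _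
    exact Nat.le_of_mul_le_mul_right h3 (by omega)
  -- Sperner + binomial bound
  have hSperner : 𝒜.card ≤ n.choose (n / 2) := by
    simpa [Fintype.card_fin] using IsAntichain.sperner hanti
  obtain ⟨m, rfl⟩ : ∃ m, n = m + 1 := ⟨n - 1, by omega⟩
  calc q ^ (k - 1) ≤ 𝒜.card := hA
    _ ≤ (m + 1).choose ((m + 1) / 2) := hSperner
    _ ≤ 2 ^ m := choose_le_two_pow
    _ = 2 ^ (m + 1 - 1) := by norm_num
end

section
/- The number of ordered pairs (a, b) of vectors in F_q^n such that a and b are linearly independent and supp(b) ⊆ supp(a) equals (q² − q + 1)^n − q^{n+1} + q − 1; in particular, this number is at most (q² − q + 1)^n. -/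
section Aux

variable {n : ℕ} {F : Type} [Field F] [Fintype F] [DecidableEq F]

lemma supp_subset_iff {a b : Fin n → F} :
    supp b ⊆ supp a ↔ ∀ i, a i = 0 → b i = 0 := by
  constructor
  · intro h i ha
    by_contra hb
    have := h (Finset.mem_filter.mpr ⟨Finset.mem_univ i, hb⟩)
    rw [supp, Finset.mem_filter] at this
    exact this.2 ha
  · intro h i hi
    simp only [supp, Finset.mem_filter, Finset.mem_univ, true_and] at hi ⊢
    intro ha; exact hi (h i ha)

/-- Equiv for pairs with support condition. -/
def e1 : {p : (Fin n → F) × (Fin n → F) // supp p.2 ⊆ supp p.1} ≃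
    (Fin n → {x : F × F // x.1 = 0 → x.2 = 0}) where
  toFun p i := ⟨(p.1.1 i, p.1.2 i), fun h => supp_subset_iff.mp p.2 i h⟩
  invFun f := ⟨(fun i => (f i).1.1, fun i => (f i).1.2),
    supp_subset_iff.mpr fun i h => (f i).2 h⟩
  left_inv p := rfl
  right_inv f := rfl

def e2 : Unit ⊕ ({a : F // a ≠ 0} × F) ≃ {x : F × F // x.1 = 0 → x.2 = 0} where
  toFun := Sum.elim (fun _ => ⟨(0, 0), fun _ => rfl⟩)
    (fun x => ⟨(x.1.1, x.2), fun h => absurd h x.1.2⟩)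
  invFun x := if h : x.1.1 = 0 then Sum.inl () else Sum.inr (⟨x.1.1, h⟩, x.1.2)
  left_inv x := by
    rcases x with _ | ⟨⟨a, ha⟩, b⟩
    · simp
    · simp [ha]
  right_inv x := by
    rcases x with ⟨⟨a, b⟩, h⟩
    by_cases ha : a = 0
    · have hb := h ha
      subst ha; subst hb; simp
    · simp [ha]

lemma card_T : Nat.card {p : (Fin n → F) × (Fin n → F) // supp p.2 ⊆ supp p.1} =
    (1 + (Fintype.card F - 1) * Fintype.card F) ^ n := by
  rw [Nat.card_congr e1, Nat.card_fun, Nat.card_congr e2.symm, Nat.card_sum, Nat.card_prod]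
  simp only [Nat.card_eq_fintype_card, Fintype.card_fin]
  simp only [Nat.card_eq_fintype_card, Fintype.card_unit]
  congr 2
  rw [Fintype.card_subtype_compl, Fintype.card_subtype_eq]

lemma not_li_iff {a b : Fin n → F} :
    ¬ LinearIndependent F ![a, b] ↔ b = 0 ∨ ∃ c : F, c • b = a := by
  rw [linearIndependent_fin2]
  simp only [Matrix.cons_val_one, Matrix.head_cons, Matrix.cons_val_zero]
  push_neg
  constructor
  · intro h
    by_cases hb : b = 0
    · exact Or.inl hb
    · exact Or.inr (h hb)
  · rintro (h | h)
    · intro h'; exact absurd h h'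
    · intro _; exact h

/-- Equiv for dependent pairs with support condition. -/
noncomputable def e3 : (Fin n → F) ⊕ ({b : Fin n → F // b ≠ 0} × {c : F // c ≠ 0}) ≃
    {p : (Fin n → F) × (Fin n → F) //
      ¬ LinearIndependent F ![p.1, p.2] ∧ supp p.2 ⊆ supp p.1} := by
  apply Equiv.ofBijective
    (Sum.elim
      (fun a => ⟨(a, 0), by
        refine ⟨?_, ?_⟩
        · rw [not_li_iff]; exact Or.inl rfl
        · rw [supp_subset_iff]; intro i _; rfl⟩)
      (fun x => ⟨(x.2.1 • x.1.1, x.1.1), by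
        refine ⟨?_, ?_⟩
        · rw [not_li_iff]; exact Or.inr ⟨x.2.1, rfl⟩
        · rw [supp_subset_iff]
          intro i h
          have h' : (x.2 : F) * (x.1 : Fin n → F) i = 0 := h
          exact (mul_eq_zero.mp h').resolve_left x.2.2⟩))
  constructor
  · rintro (a₁ | ⟨⟨b₁, hb₁⟩, ⟨c₁, hc₁⟩⟩) (a₂ | ⟨⟨b₂, hb₂⟩, ⟨c₂, hc₂⟩⟩) h <;>
      simp only [Sum.elim_inl, Sum.elim_inr, Subtype.mk.injEq, Prod.mk.injEq] at h
    · rw [h.1]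
    · exact absurd h.2.symm hb₂
    · exact absurd h.2 hb₁
    · obtain ⟨h1, h2⟩ := h
      subst h2
      obtain ⟨i, hi⟩ : ∃ i, b₁ i ≠ 0 := by
        by_contra hc
        push_neg at hc
        exact hb₁ (funext hc)
      have hmul : c₁ * b₁ i = c₂ * b₁ i := by
        have := congrFun h1 i
        simpa [Pi.smul_apply, smul_eq_mul] using this
      have hc : c₁ = c₂ := mul_right_cancel₀ hi hmul
      subst hc
      rfl
  · rintro ⟨⟨a, b⟩, hdep, hsupp⟩
    rw [not_li_iff] at hdep
    rcases hdep with hb | ⟨c, hc⟩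
    · exact ⟨Sum.inl a, Subtype.ext (congrArg (Prod.mk a) hb.symm)⟩
    · by_cases hb : b = 0
      · exact ⟨Sum.inl a, Subtype.ext (congrArg (Prod.mk a) hb.symm)⟩
      · have hcc : c ≠ 0 := by
          rintro rfl
          simp only [zero_smul] at hc
          apply hb
          funext i
          have := supp_subset_iff.mp hsupp i
          rw [← hc] at this
          exact this rfl
        refine ⟨Sum.inr (⟨b, hb⟩, ⟨c, hcc⟩), Subtype.ext ?_⟩
        show (c • b, b) = (a, b)
        rw [hc]

lemma card_D : Nat.card {p : (Fin n → F) × (Fin n → F) //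
      ¬ LinearIndependent F ![p.1, p.2] ∧ supp p.2 ⊆ supp p.1} =
    Fintype.card F ^ n + (Fintype.card F ^ n - 1) * (Fintype.card F - 1) := by
  rw [Nat.card_congr e3.symm, Nat.card_sum, Nat.card_prod]
  simp only [Nat.card_eq_fintype_card]
  congr 1
  · rw [Fintype.card_fun, Fintype.card_fin]
  · congr 1
    · rw [Fintype.card_subtype_compl, Fintype.card_subtype_eq,
        Fintype.card_fun, Fintype.card_fin]
    · rw [Fintype.card_subtype_compl, Fintype.card_subtype_eq]

lemma split_card :
    Nat.card {p : (Fin n → F) × (Fin n → F) //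
        LinearIndependent F ![p.1, p.2] ∧ supp p.2 ⊆ supp p.1} +
    Nat.card {p : (Fin n → F) × (Fin n → F) //
        ¬ LinearIndependent F ![p.1, p.2] ∧ supp p.2 ⊆ supp p.1} =
    Nat.card {p : (Fin n → F) × (Fin n → F) // supp p.2 ⊆ supp p.1} := by
  classical
  rw [← Nat.card_sum]
  apply Nat.card_congr
  refine Equiv.trans ?_ (Equiv.sumCompl (fun x : {p : (Fin n → F) × (Fin n → F) //
    supp p.2 ⊆ supp p.1} => LinearIndependent F ![x.1.1, x.1.2]))
  refine Equiv.sumCongr ?_ ?_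
  · exact ((Equiv.subtypeSubtypeEquivSubtypeInter _ _).trans
      (Equiv.subtypeEquivRight (fun p => and_comm))).symm
  · exact ((Equiv.subtypeSubtypeEquivSubtypeInter _ _).trans
      (Equiv.subtypeEquivRight (fun p => and_comm))).symm

end Aux

/-- The number of ordered pairs `(a, b)` of linearly independent vectors of `F_q^n` with
`supp b ⊆ supp a` is `(q² - q + 1)^n - q^(n+1) + q - 1`; in particular it is at most
`(q² - q + 1)^n`. -/
theorem count_bad_pairs {n : ℕ} {F : Type} [Field F] [Fintype F] [DecidableEq F] :
    (Nat.card {p : (Fin n → F) × (Fin n → F) //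
        LinearIndependent F ![p.1, p.2] ∧ supp p.2 ⊆ supp p.1} : ℤ) =
      ((Fintype.card F : ℤ) ^ 2 - Fintype.card F + 1) ^ n -
        (Fintype.card F : ℤ) ^ (n + 1) + Fintype.card F - 1 ∧
    (Nat.card {p : (Fin n → F) × (Fin n → F) //
        LinearIndependent F ![p.1, p.2] ∧ supp p.2 ⊆ supp p.1} : ℤ) ≤
      ((Fintype.card F : ℤ) ^ 2 - Fintype.card F + 1) ^ n := by
  have hq : 1 ≤ Fintype.card F := Fintype.card_pos
  have hqn : 1 ≤ Fintype.card F ^ n := Nat.one_le_pow _ _ Fintype.card_pos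
  have hsplit := split_card (n := n) (F := F)
  rw [card_D, card_T] at hsplit
  have hcast := congrArg (Nat.cast : ℕ → ℤ) hsplit
  push_cast [Nat.cast_sub hq, Nat.cast_sub hqn] at hcast
  set q : ℤ := (Fintype.card F : ℤ) with hqdef
  have hpow : (1 + (q - 1) * q) = q ^ 2 - q + 1 := by ring
  rw [hpow] at hcast
  have h1 : (1 : ℤ) ≤ q := by rw [hqdef]; exact_mod_cast hq
  have h2 : (1 : ℤ) ≤ q ^ n := by
    have := pow_pos (show (0:ℤ) < q by linarith) n
    omega
  constructor
  · have heq : (q ^ n + (q ^ n - 1) * (q - 1)) = q ^ (n + 1) - q + 1 := by ring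
    rw [heq] at hcast
    linarith
  · have hD : (0 : ℤ) ≤ q ^ n + (q ^ n - 1) * (q - 1) := by nlinarith
    linarith
end

section
/- (Minimal bound, counting form) Let 2 ≤ k ≤ n. If the number of k-dimensional subspaces of F_q^n is strictly greater than the number of (k−2)-dimensional subspaces of F_q^{n−2} multiplied by (q² − q + 1)^n, then there exists a k-dimensional linear code C ⊆ F_q^n that is minimal, i.e., every nonzero codeword c ∈ C has the property that each c' ∈ C with supp(c') ⊆ supp(c) is a scalar multiple of c. -/
set_option synthInstance.maxHeartbeats 1000000
set_option maxHeartbeats 1000000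

open Module Submodule

section Aux

variable {F : Type} [Field F] [Fintype F] [DecidableEq F]

/-- Pairs of field elements where the second nonzero forces the first nonzero. -/
lemma aux_card_T :
    Nat.card {x : F × F // x.2 ≠ 0 → x.1 ≠ 0} =
      Fintype.card F ^ 2 - Fintype.card F + 1 := by
  classical
  set q := Fintype.card F with hq
  have hq1 : 1 ≤ q := Fintype.card_pos
  -- the complement subtype is equivalent to nonzero elements
  have e1 : {x : F × F // ¬ (x.2 ≠ 0 → x.1 ≠ 0)} ≃ {b : F // b ≠ 0} :=
    { toFun := fun x => ⟨x.1.2, by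
        have := x.2; push_neg at this; exact this.1⟩
      invFun := fun b => ⟨(0, b.1), by push_neg; exact ⟨b.2, rfl⟩⟩
      left_inv := fun x => by
        have hx := x.2; push_neg at hx
        ext <;> simp [hx.2.symm]
      right_inv := fun b => rfl }
  have hne : Fintype.card {b : F // b ≠ 0} = q - 1 := by
    have := Fintype.card_subtype_compl (fun b : F => b = (0 : F))
    simpa [Fintype.card_subtype_eq, hq] using this
  have hcompl := Fintype.card_subtype_compl (fun x : F × F => x.2 ≠ 0 → x.1 ≠ 0)
  have hcarde : Fintype.card {x : F × F // ¬ (x.2 ≠ 0 → x.1 ≠ 0)} = q - 1 := by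
    rw [Fintype.card_congr e1, hne]
  have hle : Fintype.card {x : F × F // x.2 ≠ 0 → x.1 ≠ 0} ≤ Fintype.card (F × F) :=
    Fintype.card_subtype_le _
  have hcardprod : Fintype.card (F × F) = q * q := by simp [hq]
  have hqq : q ≤ q * q := Nat.le_mul_of_pos_left q hq1
  have hsq : q ^ 2 = q * q := sq q
  rw [Nat.card_eq_fintype_card]
  omega

end Aux

/-- Minimal bound (counting form): if there are more `k`-dimensional subspaces of `F_q^n`
than `(q² - q + 1)^n` times the number of `(k-2)`-dimensional subspaces of `F_q^(n-2)`,
then some `k`-dimensional linear code of length `n` over `F_q` is minimal. -/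
theorem exists_minimal_code_of_count {n k : ℕ} {F : Type} [Field F] [Fintype F]
    [DecidableEq F] (hk2 : 2 ≤ k) (hkn : k ≤ n)
    (hcount :
      Nat.card {U : Submodule F (Fin (n - 2) → F) // Module.finrank F U = k - 2} *
          (Fintype.card F ^ 2 - Fintype.card F + 1) ^ n <
        Nat.card {U : Submodule F (Fin n → F) // Module.finrank F U = k}) :
    ∃ C : Submodule F (Fin n → F), Module.finrank F C = k ∧
      ∀ c ∈ C, c ≠ 0 → ∀ c' ∈ C, supp c' ⊆ supp c → ∃ lam : F, c' = lam • c := by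
  classical
  by_contra hmin
  push_neg at hmin
  set q := Fintype.card F with hq
  have hn2 : 2 ≤ n := le_trans hk2 hkn
  -- Abbreviations
  set P := {U : Submodule F (Fin n → F) // Module.finrank F U = k} with hP
  set Wt := {U : Submodule F (Fin (n - 2) → F) // Module.finrank F U = k - 2} with hWt
  set S := {p : (Fin n → F) × (Fin n → F) // ∀ i, p.2 i ≠ 0 → p.1 i ≠ 0} with hS
  -- choose bad pairs in each k-dimensional code
  choose c hc hc0 c' hc' hsupp hns using fun u : P => hmin u.1 u.2
  -- linear independence of the chosen pair
  have hli : ∀ u : P, LinearIndependent F ![c u, c' u] := by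
    intro u
    rw [LinearIndependent.pair_iff]
    intro s t hst
    by_cases ht : t = 0
    · subst ht
      simp only [zero_smul, add_zero] at hst
      rcases smul_eq_zero.mp hst with h | h
      · exact ⟨h, rfl⟩
      · exact absurd h (hc0 u)
    · exfalso
      apply hns u (-s / t)
      have h2 : t • c' u = -(s • c u) := neg_eq_of_add_eq_zero_right hst |>.symm
      calc c' u = t⁻¹ • (t • c' u) := (inv_smul_smul₀ ht (c' u)).symm
        _ = t⁻¹ • -(s • c u) := by rw [h2]
        _ = (-s / t) • c u := by
            rw [smul_neg, smul_smul, ← neg_smul]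
            congr 1
            field_simp
  -- the span of the pair
  have hVle : ∀ u : P, Submodule.span F {c u, c' u} ≤ u.1 := by
    intro u
    rw [Submodule.span_le]
    rintro x hx
    rcases hx with rfl | rfl
    · exact hc u
    · simpa using hc' u
  have hrange2 : ∀ u : P, Set.range ![c u, c' u] = {c u, c' u} := by
    intro u
    simp [Matrix.range_cons, Matrix.range_empty, Set.pair_comm]
  have hV2 : ∀ u : P, Module.finrank F (Submodule.span F {c u, c' u}) = 2 := by
    intro u
    rw [← hrange2 u]
    rw [finrank_span_eq_card (hli u)]
    simp
  have hfrn : Module.finrank F (Fin n → F) = n := by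
    rw [Module.finrank_pi]; simp
  have hfrn2 : Module.finrank F (Fin (n - 2) → F) = n - 2 := by
    rw [Module.finrank_pi]; simp
  have hQ : ∀ u : P,
      Module.finrank F ((Fin n → F) ⧸ Submodule.span F {c u, c' u}) = n - 2 := by
    intro u
    have := Submodule.finrank_quotient_add_finrank (Submodule.span F {c u, c' u})
    rw [hfrn, hV2 u] at this
    omega
  -- the generic quotient identification
  let φ : ∀ V : Submodule F (Fin n → F), ((Fin n → F) ⧸ V) →ₗ[F] (Fin (n - 2) → F) :=
    fun V =>
      if h : Nonempty (((Fin n → F) ⧸ V) ≃ₗ[F] (Fin (n - 2) → F)) then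
        (Classical.choice h).toLinearMap
      else 0
  have hφne : ∀ V : Submodule F (Fin n → F),
      Module.finrank F ((Fin n → F) ⧸ V) = n - 2 →
      Nonempty (((Fin n → F) ⧸ V) ≃ₗ[F] (Fin (n - 2) → F)) := by
    intro V hV
    exact FiniteDimensional.nonempty_linearEquiv_of_finrank_eq (by rw [hV, hfrn2])
  have hφinj : ∀ V : Submodule F (Fin n → F),
      Module.finrank F ((Fin n → F) ⧸ V) = n - 2 → Function.Injective (φ V) := by
    intro V hV
    have h := hφne V hV
    simp only [φ, dif_pos h]
    exact (Classical.choice h).injective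
  have hφmap : ∀ V : Submodule F (Fin n → F),
      Module.finrank F ((Fin n → F) ⧸ V) = n - 2 →
      ∀ p : Submodule F ((Fin n → F) ⧸ V),
        Module.finrank F (p.map (φ V)) = Module.finrank F p := by
    intro V hV p
    have h := hφne V hV
    have key : φ V = (Classical.choice h).toLinearMap := dif_pos h
    rw [key]
    exact LinearEquiv.finrank_map_eq (Classical.choice h) p
  -- finrank of the image of U in the quotient
  have hrk : ∀ u : P,
      Module.finrank F (u.1.map (Submodule.span F {c u, c' u}).mkQ) = k - 2 := by
    intro u
    set V := Submodule.span F {c u, c' u} with hV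
    have hf := LinearMap.finrank_range_add_finrank_ker (V.mkQ ∘ₗ u.1.subtype)
    have hrange : LinearMap.range (V.mkQ ∘ₗ u.1.subtype) = u.1.map V.mkQ := by
      rw [LinearMap.range_comp, Submodule.range_subtype]
    have hker : LinearMap.ker (V.mkQ ∘ₗ u.1.subtype) = V.comap u.1.subtype := by
      rw [LinearMap.ker_comp, Submodule.ker_mkQ]
    have hkerrk : Module.finrank F (V.comap u.1.subtype) = 2 := by
      rw [(Submodule.comapSubtypeEquivOfLe (hVle u)).finrank_eq]
      exact hV2 u
    rw [hrange, hker, hkerrk, u.2] at hf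
    omega
  -- the injection
  have hWfin : ∀ u : P,
      Module.finrank F
        (((u.1.map (Submodule.span F {c u, c' u}).mkQ)).map
          (φ (Submodule.span F {c u, c' u}))) = k - 2 := by
    intro u
    rw [hφmap _ (hQ u)]
    exact hrk u
  let e : P → Wt × S := fun u =>
    (⟨((u.1.map (Submodule.span F {c u, c' u}).mkQ)).map
        (φ (Submodule.span F {c u, c' u})), hWfin u⟩,
     ⟨(c u, c' u), by
        intro i hi
        have h1 : i ∈ supp (c' u) := by simp [supp, hi]
        have h2 := hsupp u h1
        simpa [supp] using h2⟩)
  have einj : Function.Injective e := by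
    intro u1 u2 h
    rw [Prod.mk.injEq] at h
    obtain ⟨hW, hpair⟩ := h
    have hpair' : (c u1, c' u1) = (c u2, c' u2) := congrArg Subtype.val hpair
    have hcc : c u1 = c u2 := congrArg Prod.fst hpair'
    have hcc' : c' u1 = c' u2 := congrArg Prod.snd hpair'
    have hW' := congrArg Subtype.val hW
    simp only at hW'
    rw [hcc, hcc'] at hW'
    set V := Submodule.span F {c u2, c' u2} with hVdef
    have h1 : u1.1.map V.mkQ = u2.1.map V.mkQ :=
      Submodule.map_injective_of_injective (hφinj V (hQ u2)) hW'
    have h2 := congrArg (Submodule.comap V.mkQ) h1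
    rw [Submodule.comap_map_mkQ, Submodule.comap_map_mkQ] at h2
    have hle1 : V ≤ u1.1 := by rw [hVdef, ← hcc, ← hcc']; exact hVle u1
    have hle2 : V ≤ u2.1 := hVle u2
    rw [sup_eq_right.mpr hle1, sup_eq_right.mpr hle2] at h2
    exact Subtype.ext h2
  -- counting
  have hfinWt : Finite Wt := by infer_instance
  have hfinS : Finite S := by infer_instance
  have hcard1 : Nat.card P ≤ Nat.card Wt * Nat.card S := by
    have := Nat.card_le_card_of_injective e einj
    rwa [Nat.card_prod] at this
  -- card of S
  have hScard : Nat.card S ≤ (q ^ 2 - q + 1) ^ n := by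
    let T := {x : F × F // x.2 ≠ 0 → x.1 ≠ 0}
    let j : S → (Fin n → T) := fun s i => ⟨(s.1.1 i, s.1.2 i), s.2 i⟩
    have hjinj : Function.Injective j := by
      intro s1 s2 h
      apply Subtype.ext
      have h1 : ∀ i, s1.1.1 i = s2.1.1 i ∧ s1.1.2 i = s2.1.2 i := by
        intro i
        have h3 : ((s1.1.1 i, s1.1.2 i) : F × F) = (s2.1.1 i, s2.1.2 i) :=
          congrArg Subtype.val (congrFun h i)
        exact ⟨congrArg Prod.fst h3, congrArg Prod.snd h3⟩
      ext i
      · exact (h1 i).1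
      · exact (h1 i).2
    have := Nat.card_le_card_of_injective j hjinj
    rw [Nat.card_pi] at this
    calc Nat.card S ≤ ∏ _i : Fin n, Nat.card T := this
      _ = (Nat.card T) ^ n := by rw [Finset.prod_const]; simp
      _ = (q ^ 2 - q + 1) ^ n := by rw [aux_card_T]
  have : Nat.card P ≤ Nat.card Wt * (q ^ 2 - q + 1) ^ n :=
    le_trans hcard1 (Nat.mul_le_mul_left _ hScard)
  omega
end

section
/- (Minimal bound, asymptotic form) Let q be a prime power and let R be a real number with 0 < R < (1/2)·log_q(q² / (q² − q + 1)). Then there exists N such that for every n ≥ N there exists a minimal linear code of length n and dimension at least ⌊R·n⌋ over F_q. -/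
open Finset

-- kernel counting lemma
lemma card_ker_mul {F V W : Type} [Field F] [Fintype F] [AddCommGroup V] [Module F V]
    [AddCommGroup W] [Module F W] [Fintype V] [Fintype W] [DecidableEq W]
    (ℓ : V →ₗ[F] W) (h : Function.Surjective ℓ) :
    Fintype.card {g : V // ℓ g = 0} * Fintype.card W = Fintype.card V := by
  classical
  have h1 : Fintype.card {g : V // ℓ g = 0} = Fintype.card (LinearMap.ker ℓ) := by
    apply Fintype.card_congr; exact Equiv.subtypeEquivRight (by simp [LinearMap.mem_ker])
  have hV : FiniteDimensional F V := Module.Finite.of_finite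
  have hW : FiniteDimensional F W := Module.Finite.of_finite
  have h2 := LinearMap.finrank_range_add_finrank_ker ℓ
  have h3 : LinearMap.range ℓ = ⊤ := LinearMap.range_eq_top.mpr h
  rw [h3, finrank_top] at h2
  rw [h1, Module.card_eq_pow_finrank (K := F) (V := (LinearMap.ker ℓ : Submodule F V)),
    Module.card_eq_pow_finrank (K := F) (V := W), Module.card_eq_pow_finrank (K := F) (V := V),
    ← pow_add]
  rw [← h2, add_comm]
lemma card_pi_filter {β : Type} [Fintype β] [DecidableEq β] (n : ℕ) (P : β → Prop)
    [DecidablePred P] :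
    (univ.filter fun G : Fin n → β => ∀ i, P (G i)).card = (univ.filter P).card ^ n := by
  rw [← Fintype.card_subtype, ← Fintype.card_subtype,
    Fintype.card_congr (Equiv.subtypePiEquivPi (p := fun _ : Fin n => P)),
    Fintype.card_pi]
  simp

variable {F : Type} [Field F] [Fintype F] [DecidableEq F]

-- functional g ↦ dot u g
noncomputable def dotL {k : ℕ} (u : Fin k → F) : (Fin k → F) →ₗ[F] F where
  toFun g := dotProduct u g
  map_add' a b := by simp [dotProduct_add]
  map_smul' c a := by simp [dotProduct_smul]

lemma dotL_surj {k : ℕ} {u : Fin k → F} (hu : u ≠ 0) : Function.Surjective (dotL u) := by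
  obtain ⟨j, hj⟩ : ∃ j, u j ≠ 0 := by
    by_contra h; push_neg at h; exact hu (funext h)
  intro a
  refine ⟨Pi.single j ((u j)⁻¹ * a), ?_⟩
  simp [dotL, dotProduct, Pi.single_apply, hj]

lemma card_ker_dot {k : ℕ} {u : Fin k → F} (hu : u ≠ 0) :
    Fintype.card {g : Fin k → F // dotProduct u g = 0} * Fintype.card F
      = Fintype.card F ^ k := by
  have := card_ker_mul (dotL u) (dotL_surj hu)
  simp only [dotL, LinearMap.coe_mk, AddHom.coe_mk] at this
  rw [Fintype.card_fun, Fintype.card_fin] at this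
  convert this using 2
  exact Fintype.card_congr (Equiv.refl _)
set_option linter.unusedSectionVars false

noncomputable def dotL2 {k : ℕ} (u v : Fin k → F) : (Fin k → F) →ₗ[F] F × F where
  toFun g := (dotProduct u g, dotProduct v g)
  map_add' a b := by simp [dotProduct_add]
  map_smul' c a := by simp [dotProduct_smul]

lemma dotL2_surj {k : ℕ} {u v : Fin k → F} (hu : u ≠ 0) (hv : ¬ ∃ l : F, v = l • u) :
    Function.Surjective (dotL2 u v) := by
  obtain ⟨g0, hg0⟩ := dotL_surj hu (1 : F)
  simp only [dotL, LinearMap.coe_mk, AddHom.coe_mk] at hg0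
  -- find h in ker of u with v ⬝ h ≠ 0
  have : ∃ h : Fin k → F, dotProduct u h = 0 ∧ dotProduct v h ≠ 0 := by
    by_contra hc
    push_neg at hc
    apply hv
    refine ⟨dotProduct v g0, ?_⟩
    funext j
    have key := hc (Pi.single j 1 - (dotProduct u (Pi.single j 1)) • g0)
      (by simp [dotProduct_sub, dotProduct_smul, hg0])
    simp only [dotProduct_sub, dotProduct_smul, smul_eq_mul, sub_eq_zero] at key
    simp only [dotProduct_single, mul_one] at key
    simp [key, Pi.smul_apply, smul_eq_mul, mul_comm]
  obtain ⟨h, hh0, hhv⟩ := this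
  rintro ⟨a, b⟩
  refine ⟨a • g0 + ((b - a * dotProduct v g0) * (dotProduct v h)⁻¹) • h, ?_⟩
  simp only [dotL2, LinearMap.coe_mk, AddHom.coe_mk, dotProduct_add,
    dotProduct_smul, smul_eq_mul, hg0, hh0, Prod.mk.injEq]
  constructor
  · ring
  · field_simp
    ring

lemma card_ker_dot2 {k : ℕ} {u v : Fin k → F} (hu : u ≠ 0) (hv : ¬ ∃ l : F, v = l • u) :
    Fintype.card {g : Fin k → F // dotProduct u g = 0 ∧ dotProduct v g = 0}
      * Fintype.card F ^ 2 = Fintype.card F ^ k := by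
  have := card_ker_mul (dotL2 u v) (dotL2_surj hu hv)
  simp only [dotL2, LinearMap.coe_mk, AddHom.coe_mk, Prod.mk_eq_zero] at this
  simpa [sq] using this

lemma k_ge_two {k : ℕ} {u v : Fin k → F} (hu : u ≠ 0) (hv : ¬ ∃ l : F, v = l • u) : 2 ≤ k := by
  by_contra h
  push_neg at h
  interval_cases k
  · exact hu (Subsingleton.elim _ _)
  · exact hv ⟨v 0 * (u 0)⁻¹, by
      funext i
      have h0 : u 0 ≠ 0 := by
        intro h0; apply hu; funext j; have : j = 0 := Subsingleton.elim _ _; rw [this, h0]; rfl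
      have : i = 0 := Subsingleton.elim _ _
      subst this
      simp [Pi.smul_apply, smul_eq_mul]
      field_simp⟩

lemma count_single {k : ℕ} {u : Fin k → F} (hu : u ≠ 0) :
    (Finset.univ.filter fun g : Fin k → F => dotProduct u g = 0).card
      = Fintype.card F ^ (k - 1) := by
  have hk : 1 ≤ k := by
    by_contra h
    push_neg at h
    interval_cases k
    exact hu (Subsingleton.elim _ _)
  have hq : 0 < Fintype.card F := Fintype.card_pos
  have h := card_ker_dot hu
  rw [Fintype.card_subtype] at h
  apply Nat.eq_of_mul_eq_mul_right hq
  rw [h, ← pow_succ]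
  congr 1
  omega

lemma count_pair {k : ℕ} {u v : Fin k → F} (hu : u ≠ 0) (hv : ¬ ∃ l : F, v = l • u) :
    (Finset.univ.filter fun g : Fin k → F =>
        dotProduct u g = 0 ∧ dotProduct v g = 0).card
      = Fintype.card F ^ (k - 2) := by
  have hk := k_ge_two hu hv
  have hq : 0 < Fintype.card F ^ 2 := pow_pos Fintype.card_pos 2
  have h := card_ker_dot2 hu hv
  rw [Fintype.card_subtype] at h
  apply Nat.eq_of_mul_eq_mul_right hq
  rw [h, ← pow_add]
  congr 1
  omega

lemma count_col {k : ℕ} {u v : Fin k → F} (hu : u ≠ 0) (hv : ¬ ∃ l : F, v = l • u) :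
    (Finset.univ.filter fun g : Fin k → F =>
        ¬(dotProduct u g = 0 ∧ dotProduct v g ≠ 0)).card
      = Fintype.card F ^ (k - 2) * (Fintype.card F ^ 2 - Fintype.card F + 1) := by
  classical
  set q := Fintype.card F with hqdef
  have hk := k_ge_two hu hv
  have hq : 1 ≤ q := Fintype.card_pos
  -- card of the bad-column set
  have hsub : (Finset.univ.filter fun g : Fin k → F =>
      dotProduct u g = 0 ∧ dotProduct v g = 0) ⊆
      (Finset.univ.filter fun g => dotProduct u g = 0) := by
    intro g hg
    simp only [Finset.mem_filter] at hg ⊢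
    exact ⟨hg.1, hg.2.1⟩
  have hbad : (Finset.univ.filter fun g : Fin k → F =>
      dotProduct u g = 0 ∧ dotProduct v g ≠ 0).card
      = q ^ (k - 1) - q ^ (k - 2) := by
    have hdiff : (Finset.univ.filter fun g : Fin k → F =>
        dotProduct u g = 0 ∧ dotProduct v g ≠ 0)
        = (Finset.univ.filter fun g => dotProduct u g = 0) \
          (Finset.univ.filter fun g =>
            dotProduct u g = 0 ∧ dotProduct v g = 0) := by
      ext g
      simp only [Finset.mem_filter, Finset.mem_sdiff, Finset.mem_univ, true_and]
      tauto
    rw [hdiff, Finset.card_sdiff_of_subset hsub, count_single hu, count_pair hu hv]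
  have htot : (Finset.univ.filter fun g : Fin k → F =>
        ¬(dotProduct u g = 0 ∧ dotProduct v g ≠ 0)).card
      = q ^ k - (q ^ (k - 1) - q ^ (k - 2)) := by
    rw [← hbad]
    have := Finset.card_filter_add_card_filter_not (s := (Finset.univ : Finset (Fin k → F)))
      (p := fun g => dotProduct u g = 0 ∧ dotProduct v g ≠ 0)
    have hcard : (Finset.univ : Finset (Fin k → F)).card = q ^ k := by
      simp [hqdef, Fintype.card_fun]
    omega
  rw [htot]
  -- arithmetic
  have e1 : q ^ k = q ^ (k - 2) * q ^ 2 := by rw [← pow_add]; congr 1; omega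
  have e2 : q ^ (k - 1) = q ^ (k - 2) * q := by rw [← pow_succ]; congr 1; omega
  have e3 : q ^ (k - 2) * (q ^ 2 - q + 1) = q ^ (k-2) * q ^ 2 - q ^ (k-2) * q + q ^ (k-2) := by
    have hqq : q ≤ q ^ 2 := by nlinarith
    rw [Nat.mul_add, Nat.mul_sub, mul_one]
  have h2 : q ^ (k-2) * 1 ≤ q ^ (k-2) * q := Nat.mul_le_mul_left _ hq
  have h1 : q ^ (k-2) * q ≤ q ^ (k-2) * q ^ 2 := Nat.mul_le_mul_left _ (by nlinarith)
  rw [e1, e2, e3]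
  omega

lemma exists_good_matrix (k n : ℕ)
    (hcount : Fintype.card F ^ k * Fintype.card F ^ ((k-1)*n)
      + Fintype.card F ^ (2*k) * (Fintype.card F ^ (k-2)
          * (Fintype.card F ^ 2 - Fintype.card F + 1)) ^ n
      < Fintype.card F ^ (k*n)) :
    ∃ G : Fin n → Fin k → F,
      (∀ u : Fin k → F, u ≠ 0 → ∃ i, dotProduct u (G i) ≠ 0) ∧
      (∀ u v : Fin k → F, u ≠ 0 → ¬(∃ l : F, v = l • u) →
        ∃ i, dotProduct u (G i) = 0 ∧ dotProduct v (G i) ≠ 0) := by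
  classical
  set q := Fintype.card F with hqdef
  set bad1 : Finset (Fin n → Fin k → F) :=
    Finset.univ.filter (fun G => ∃ u : Fin k → F, u ≠ 0 ∧ ∀ i, dotProduct u (G i) = 0)
    with hbad1def
  set bad2 : Finset (Fin n → Fin k → F) :=
    Finset.univ.filter (fun G => ∃ u v : Fin k → F, (u ≠ 0 ∧ ¬(∃ l : F, v = l • u)) ∧
      ∀ i, ¬(dotProduct u (G i) = 0 ∧ dotProduct v (G i) ≠ 0)) with hbad2def
  have hcard1 : bad1.card ≤ q ^ k * q ^ ((k-1)*n) := by
    have hsub : bad1 ⊆ (Finset.univ.filter (fun u : Fin k → F => u ≠ 0)).biUnion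
        (fun u => Finset.univ.filter (fun G : Fin n → Fin k → F =>
          ∀ i, dotProduct u (G i) = 0)) := by
      intro G hG
      simp only [hbad1def, Finset.mem_filter, Finset.mem_univ, true_and] at hG
      obtain ⟨u, hu, hall⟩ := hG
      simp only [Finset.mem_biUnion, Finset.mem_filter, Finset.mem_univ, true_and]
      exact ⟨u, hu, hall⟩
    calc bad1.card ≤ _ := Finset.card_le_card hsub
      _ ≤ ∑ u ∈ Finset.univ.filter (fun u : Fin k → F => u ≠ 0),
            (Finset.univ.filter (fun G : Fin n → Fin k → F =>
              ∀ i, dotProduct u (G i) = 0)).card := Finset.card_biUnion_le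
      _ ≤ _ := by
          have hterm : ∀ u ∈ Finset.univ.filter (fun u : Fin k → F => u ≠ 0),
              (Finset.univ.filter (fun G : Fin n → Fin k → F =>
                ∀ i, dotProduct u (G i) = 0)).card = q ^ ((k-1)*n) := by
            intro u hu
            simp only [Finset.mem_filter] at hu
            rw [card_pi_filter n (fun g => dotProduct u g = 0), count_single hu.2,
              ← pow_mul]
          rw [Finset.sum_congr rfl hterm, Finset.sum_const, smul_eq_mul]
          apply Nat.mul_le_mul_right
          calc (Finset.univ.filter (fun u : Fin k → F => u ≠ 0)).card
              ≤ (Finset.univ : Finset (Fin k → F)).card := Finset.card_filter_le _ _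
            _ = q ^ k := by simp [hqdef, Fintype.card_fun]
  have hcard2 : bad2.card ≤ q ^ (2*k) * (q ^ (k-2) * (q^2 - q + 1)) ^ n := by
    have hsub : bad2 ⊆ ((Finset.univ ×ˢ Finset.univ : Finset ((Fin k → F) × (Fin k → F))).filter
        (fun p => p.1 ≠ 0 ∧ ¬(∃ l : F, p.2 = l • p.1))).biUnion
        (fun p => Finset.univ.filter (fun G : Fin n → Fin k → F =>
          ∀ i, ¬(dotProduct p.1 (G i) = 0 ∧ dotProduct p.2 (G i) ≠ 0))) := by
      intro G hG
      simp only [hbad2def, Finset.mem_filter, Finset.mem_univ, true_and] at hG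
      obtain ⟨u, v, ⟨hu, hv⟩, hall⟩ := hG
      simp only [Finset.mem_biUnion, Finset.mem_filter, Finset.mem_univ, Finset.mem_product,
        true_and, and_true]
      exact ⟨(u, v), ⟨hu, hv⟩, hall⟩
    calc bad2.card ≤ _ := Finset.card_le_card hsub
      _ ≤ ∑ p ∈ ((Finset.univ ×ˢ Finset.univ : Finset ((Fin k → F) × (Fin k → F))).filter
            (fun p => p.1 ≠ 0 ∧ ¬(∃ l : F, p.2 = l • p.1))),
            (Finset.univ.filter (fun G : Fin n → Fin k → F =>
              ∀ i, ¬(dotProduct p.1 (G i) = 0 ∧ dotProduct p.2 (G i) ≠ 0))).card :=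
        Finset.card_biUnion_le
      _ ≤ _ := by
          have hterm : ∀ p ∈ ((Finset.univ ×ˢ Finset.univ :
              Finset ((Fin k → F) × (Fin k → F))).filter
              (fun p => p.1 ≠ 0 ∧ ¬(∃ l : F, p.2 = l • p.1))),
              (Finset.univ.filter (fun G : Fin n → Fin k → F =>
                ∀ i, ¬(dotProduct p.1 (G i) = 0 ∧ dotProduct p.2 (G i) ≠ 0))).card
              = (q ^ (k-2) * (q^2 - q + 1)) ^ n := by
            intro p hp
            simp only [Finset.mem_filter] at hp
            rw [card_pi_filter n
              (fun g => ¬(dotProduct p.1 g = 0 ∧ dotProduct p.2 g ≠ 0)),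
              count_col hp.2.1 hp.2.2]
          rw [Finset.sum_congr rfl hterm, Finset.sum_const, smul_eq_mul]
          apply Nat.mul_le_mul_right
          calc _ ≤ (Finset.univ ×ˢ Finset.univ : Finset ((Fin k → F) × (Fin k → F))).card :=
              Finset.card_filter_le _ _
            _ = q ^ (2*k) := by
                simp [hqdef, Fintype.card_fun]
                rw [← pow_add]
                congr 1
                omega
  have htotal : (Finset.univ : Finset (Fin n → Fin k → F)).card = q ^ (k*n) := by
    simp [hqdef, Fintype.card_fun, ← pow_mul]
  -- exists G outside bad1 ∪ bad2
  have hlt : (bad1 ∪ bad2).card < (Finset.univ : Finset (Fin n → Fin k → F)).card := by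
    calc (bad1 ∪ bad2).card ≤ bad1.card + bad2.card := Finset.card_union_le _ _
      _ ≤ q ^ k * q ^ ((k-1)*n) + q ^ (2*k) * (q ^ (k-2) * (q^2 - q + 1)) ^ n :=
        Nat.add_le_add hcard1 hcard2
      _ < q ^ (k*n) := hcount
      _ = _ := htotal.symm
  have hne : ((bad1 ∪ bad2)ᶜ : Finset (Fin n → Fin k → F)).Nonempty := by
    rw [← Finset.card_pos, Finset.card_compl]
    have hcu : (Finset.univ : Finset (Fin n → Fin k → F)).card
      = Fintype.card (Fin n → Fin k → F) := Finset.card_univ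
    omega
  obtain ⟨G, hG⟩ := hne
  rw [Finset.mem_compl, Finset.mem_union] at hG
  push_neg at hG
  obtain ⟨hG1, hG2⟩ := hG
  simp only [hbad1def, Finset.mem_filter, Finset.mem_univ, true_and, not_exists, not_and,
    not_forall] at hG1
  simp only [hbad2def, Finset.mem_filter, Finset.mem_univ, true_and, not_exists, not_and,
    not_forall, not_not] at hG2
  refine ⟨G, ?_, ?_⟩
  · intro u hu
    exact hG1 u hu
  · intro u v hu hv
    obtain ⟨i, hi⟩ := hG2 u v ⟨hu, fun l hl => hv ⟨l, hl⟩⟩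
    exact ⟨i, hi.1, hi.2⟩

noncomputable def cwL {k n : ℕ} (G : Fin n → Fin k → F) : (Fin k → F) →ₗ[F] (Fin n → F) where
  toFun u := fun i => dotProduct u (G i)
  map_add' a b := by funext i; simp [add_dotProduct]
  map_smul' c a := by funext i; simp [smul_dotProduct]

lemma exists_minimal_code (k n : ℕ)
    (hcount : Fintype.card F ^ k * Fintype.card F ^ ((k-1)*n)
      + Fintype.card F ^ (2*k) * (Fintype.card F ^ (k-2)
          * (Fintype.card F ^ 2 - Fintype.card F + 1)) ^ n
      < Fintype.card F ^ (k*n)) :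
    ∃ C : Submodule F (Fin n → F), Module.finrank F C = k ∧
      ∀ c ∈ C, c ≠ 0 → ∀ c' ∈ C, supp c' ⊆ supp c → ∃ lam : F, c' = lam • c := by
  obtain ⟨G, hG1, hG2⟩ := exists_good_matrix k n hcount
  refine ⟨LinearMap.range (cwL G), ?_, ?_⟩
  · have hinj : Function.Injective (cwL G) := by
      rw [← LinearMap.ker_eq_bot, LinearMap.ker_eq_bot']
      intro u hu
      by_contra hne
      obtain ⟨i, hi⟩ := hG1 u hne
      apply hi
      have := congrFun hu i
      simpa [cwL] using this
    rw [LinearMap.finrank_range_of_inj hinj]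
    simp
  · rintro c ⟨u, rfl⟩ hc c' ⟨v, rfl⟩ hsub
    have hu : u ≠ 0 := by rintro rfl; exact hc (map_zero _)
    by_cases hv : ∃ l : F, v = l • u
    · obtain ⟨l, rfl⟩ := hv
      exact ⟨l, map_smul _ _ _⟩
    · exfalso
      obtain ⟨i, hi0, hine⟩ := hG2 u v hu hv
      have hmem : i ∈ supp (cwL G v) := by
        simp only [supp, Finset.mem_filter, Finset.mem_univ, true_and]
        simpa [cwL] using hine
      have hnmem : i ∉ supp (cwL G u) := by
        simp only [supp, Finset.mem_filter, Finset.mem_univ, true_and, not_not]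
        simpa [cwL] using hi0
      exact hnmem (hsub hmem)

theorem exists_minimal_codes_of_rate_aux {F : Type} [Field F] [Fintype F] [DecidableEq F]
    (R : ℝ) (hR0 : 0 < R)
    (hR : R < (1 / 2) * Real.logb (Fintype.card F)
        ((Fintype.card F : ℝ) ^ 2 /
          ((Fintype.card F : ℝ) ^ 2 - (Fintype.card F : ℝ) + 1))) :
    ∃ N : ℕ, ∀ n : ℕ, N ≤ n →
      ∃ C : Submodule F (Fin n → F),
        ⌊R * n⌋₊ ≤ Module.finrank F C ∧
        ∀ c ∈ C, c ≠ 0 → ∀ c' ∈ C, supp c' ⊆ supp c → ∃ lam : F, c' = lam • c := by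
  classical
  set q : ℕ := Fintype.card F with hqdef
  have hq2 : 2 ≤ q := Fintype.one_lt_card
  set x : ℝ := (q : ℝ) with hxdef
  have hx1 : 1 < x := by rw [hxdef]; exact_mod_cast (by omega : 1 < q)
  have hx0 : 0 < x := by linarith
  have hqq : q ≤ q ^ 2 := by nlinarith
  set cN : ℕ := q ^ 2 - q + 1 with hcNdef
  have hcR : (cN : ℝ) = x ^ 2 - x + 1 := by
    rw [hcNdef]
    push_cast [hqq]
    ring
  have hcx_pos : (0:ℝ) < x ^ 2 - x + 1 := by nlinarith
  have hcx1 : (1:ℝ) ≤ x ^ 2 - x + 1 := by nlinarith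
  have hfrac_pos : (0:ℝ) < x ^ 2 / (x ^ 2 - x + 1) := by positivity
  -- key1 : x ^ (2R) * (x²-x+1) < x²
  have hlogR : 2 * R < Real.logb x (x ^ 2 / (x ^ 2 - x + 1)) := by
    linarith [hR]
  have key1 : x ^ (2 * R) * (x ^ 2 - x + 1) < x ^ 2 := by
    have h1 : x ^ (2 * R) < x ^ Real.logb x (x ^ 2 / (x ^ 2 - x + 1)) :=
      Real.rpow_lt_rpow_left_iff hx1 |>.mpr hlogR
    rw [Real.rpow_logb hx0 (ne_of_gt hx1) hfrac_pos] at h1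
    exact (lt_div_iff₀ hcx_pos).mp h1
  -- key2 : R < 1
  have key2 : R < 1 := by
    have hle : Real.logb x (x ^ 2 / (x ^ 2 - x + 1)) ≤ Real.logb x (x ^ 2) := by
      apply Real.logb_le_logb_of_le hx1 hfrac_pos
      rw [div_le_iff₀ hcx_pos]
      nlinarith
    have h2 : Real.logb x (x ^ 2) = 2 := by
      rw [← Real.rpow_two, Real.logb_rpow hx0 (ne_of_gt hx1)]
    linarith [hlogR, hle, h2.le, h2.ge]
  set r1 : ℝ := x ^ (R - 1) with hr1def
  set r2 : ℝ := x ^ (2 * R - 2) * (x ^ 2 - x + 1) with hr2def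
  have hr1_nonneg : 0 ≤ r1 := (Real.rpow_pos_of_pos hx0 _).le
  have hr1_lt : r1 < 1 := Real.rpow_lt_one_of_one_lt_of_neg hx1 (by linarith)
  have hr2_nonneg : 0 ≤ r2 := by positivity
  have hr2_lt : r2 < 1 := by
    have he : x ^ (2 * R - 2) = x ^ (2 * R) / x ^ (2:ℝ) := by
      rw [Real.rpow_sub hx0]
    rw [hr2def, he, Real.rpow_two, div_mul_eq_mul_div, div_lt_one (by positivity)]
    linarith [key1]
  have htend : Filter.Tendsto (fun n : ℕ => r1 ^ n + r2 ^ n) Filter.atTop (nhds 0) := by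
    have := (tendsto_pow_atTop_nhds_zero_of_lt_one hr1_nonneg hr1_lt).add
      (tendsto_pow_atTop_nhds_zero_of_lt_one hr2_nonneg hr2_lt)
    simpa using this
  have hev1 : ∀ᶠ n : ℕ in Filter.atTop, r1 ^ n + r2 ^ n < 1 :=
    htend.eventually (gt_mem_nhds one_pos)
  have hev2 : ∀ᶠ n : ℕ in Filter.atTop, (2 : ℝ) ≤ R * n := by
    have ht : Filter.Tendsto (fun n : ℕ => R * n) Filter.atTop Filter.atTop :=
      (tendsto_natCast_atTop_atTop).const_mul_atTop hR0
    exact ht.eventually_ge_atTop 2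
  obtain ⟨N, hN⟩ := Filter.eventually_atTop.mp (hev1.and hev2)
  refine ⟨N, fun n hn => ?_⟩
  obtain ⟨h1, h2⟩ := hN n hn
  set k : ℕ := ⌊R * n⌋₊ with hkdef
  have hk2 : 2 ≤ k := Nat.le_floor (by exact_mod_cast h2)
  have hkR : (k : ℝ) ≤ R * n := Nat.floor_le (by positivity)
  -- main real inequality
  have hmainR : x ^ k * x ^ n + x ^ (2 * k) * (cN : ℝ) ^ n < x ^ (2 * n) := by
    have hxn : ∀ m : ℕ, x ^ m = x ^ (m : ℝ) := fun m => (Real.rpow_natCast x m).symm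
    have hA : x ^ k * x ^ n ≤ r1 ^ n * x ^ (2 * n) := by
      have e1 : x ^ k * x ^ n = x ^ ((k : ℝ) + n) := by
        rw [hxn k, hxn n, ← Real.rpow_add hx0]
      have e2 : x ^ ((k : ℝ) + n) ≤ x ^ (R * n + n) :=
        Real.rpow_le_rpow_of_exponent_le hx1.le (by linarith)
      have e3 : x ^ (R * n + n) ≤ x ^ ((R - 1) * n + 2 * n) := by
        apply Real.rpow_le_rpow_of_exponent_le hx1.le
        ring_nf
        linarith
      have e4 : x ^ ((R - 1) * n + 2 * n) = r1 ^ n * x ^ (2 * n) := by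
        rw [Real.rpow_add hx0, hr1def, ← Real.rpow_natCast (x ^ (R - 1)) n,
          ← Real.rpow_mul hx0.le, hxn (2 * n)]
        push_cast
        ring_nf
      calc x ^ k * x ^ n = _ := e1
        _ ≤ _ := e2
        _ ≤ _ := e3
        _ = _ := e4
    have hB : x ^ (2 * k) * (cN : ℝ) ^ n ≤ r2 ^ n * x ^ (2 * n) := by
      have e1 : x ^ (2 * k) ≤ x ^ (2 * R * n) := by
        rw [hxn (2 * k)]
        apply Real.rpow_le_rpow_of_exponent_le hx1.le
        push_cast
        linarith
      have e2 : x ^ (2 * R * n) * (cN : ℝ) ^ n = r2 ^ n * x ^ (2 * n) := by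
        rw [hr2def, mul_pow, hcR]
        have p1 : (x ^ (2 * R - 2) : ℝ) ^ n = x ^ ((2 * R - 2) * (n : ℝ)) := by
          rw [← Real.rpow_natCast (x ^ (2 * R - 2)) n, ← Real.rpow_mul hx0.le]
        have p2 : x ^ (2 * n) = x ^ (2 * (n : ℝ)) := by
          rw [hxn (2 * n)]; push_cast; ring_nf
        rw [p1, p2]
        rw [show x ^ ((2 * R - 2) * (n : ℝ)) * (x ^ 2 - x + 1) ^ n * x ^ (2 * (n : ℝ))
            = (x ^ ((2 * R - 2) * (n : ℝ)) * x ^ (2 * (n : ℝ))) * (x ^ 2 - x + 1) ^ n from by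
          ring]
        rw [← Real.rpow_add hx0]
        congr 2
        ring
      calc x ^ (2 * k) * (cN : ℝ) ^ n ≤ x ^ (2 * R * n) * (cN : ℝ) ^ n := by
            apply mul_le_mul_of_nonneg_right e1 (by positivity)
        _ = _ := e2
    have hsum : r1 ^ n * x ^ (2 * n) + r2 ^ n * x ^ (2 * n) < x ^ (2 * n) := by
      have := mul_lt_mul_of_pos_right h1 (show (0:ℝ) < x ^ (2*n) by positivity)
      rw [one_mul] at this
      linarith [this]
    linarith [hA, hB, hsum]
  -- convert to ℕ
  have hmainN : q ^ k * q ^ n + q ^ (2 * k) * cN ^ n < q ^ (2 * n) := by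
    have : ((q ^ k * q ^ n + q ^ (2 * k) * cN ^ n : ℕ) : ℝ) < ((q ^ (2 * n) : ℕ) : ℝ) := by
      rw [hxdef] at hmainR
      push_cast
      exact_mod_cast hmainR
    exact_mod_cast this
  have hcount : q ^ k * q ^ ((k - 1) * n) + q ^ (2 * k) * (q ^ (k - 2) * (q ^ 2 - q + 1)) ^ n
      < q ^ (k * n) := by
    have hpos : 0 < q ^ ((k - 2) * n) := pow_pos (by omega) _
    have e1 : q ^ ((k - 1) * n) = q ^ ((k - 2) * n) * q ^ n := by
      rw [← pow_add]; congr 1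
      have : k - 1 = (k - 2) + 1 := by omega
      rw [this]; ring
    have e2 : (q ^ (k - 2) * (q ^ 2 - q + 1)) ^ n = q ^ ((k - 2) * n) * cN ^ n := by
      rw [mul_pow, ← pow_mul, hcNdef]
    have e3 : q ^ (k * n) = q ^ ((k - 2) * n) * q ^ (2 * n) := by
      rw [← pow_add]; congr 1
      conv_lhs => rw [← Nat.sub_add_cancel hk2]
      ring
    rw [e1, e2, e3]
    calc q ^ k * (q ^ ((k-2)*n) * q ^ n) + q ^ (2*k) * (q ^ ((k-2)*n) * cN ^ n)
        = q ^ ((k-2)*n) * (q ^ k * q ^ n + q ^ (2*k) * cN ^ n) := by ring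
      _ < q ^ ((k-2)*n) * q ^ (2*n) := by
          exact (Nat.mul_lt_mul_left hpos).mpr hmainN
  obtain ⟨C, hC1, hC2⟩ := exists_minimal_code k n hcount
  exact ⟨C, by rw [hC1], hC2⟩


/-- Minimal bound (asymptotic form): over any finite field `F_q`, for every rate
`0 < R < (1/2)·log_q(q² / (q² - q + 1))`, for all sufficiently large lengths `n` there
exists a minimal linear code of length `n` and dimension at least `⌊R·n⌋` over `F_q`. -/
theorem exists_minimal_codes_of_rate {F : Type} [Field F] [Fintype F] [DecidableEq F]
    (R : ℝ) (hR0 : 0 < R)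
    (hR : R < (1 / 2) * Real.logb (Fintype.card F)
        ((Fintype.card F : ℝ) ^ 2 /
          ((Fintype.card F : ℝ) ^ 2 - (Fintype.card F : ℝ) + 1))) :
    ∃ N : ℕ, ∀ n : ℕ, N ≤ n →
      ∃ C : Submodule F (Fin n → F),
        ⌊R * n⌋₊ ≤ Module.finrank F C ∧
        ∀ c ∈ C, c ≠ 0 → ∀ c' ∈ C, supp c' ⊆ supp c → ∃ lam : F, c' = lam • c := by
  exact exists_minimal_codes_of_rate_aux R hR0 hR
end
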